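/- Let f : 𝒳 → ℝ be measurable and assume that P( μ_0(X_1) = μ_0(X_2) ) = 0 and P( f(X_1) = f(X_2) ) = 0. Then 0 ≤ P{ μ_0(X_1) < μ_0(X_2), Y_1 = 0, Y_2 = 1 } − P{ f(X_1) < f(X_2), Y_1 = 0, Y_2 = 1 } ≤ (1/2) E[ |μ_0(X_1) − μ_0(X_2)| · 1{ (μ_0(X_1) − μ_0(X_2)) (f(X_1) − f(X_2)) < 0 } ]. -/

import Mathlib

open MeasureTheory ProbabilityTheory

private lemma integrable_bdd {α : Type*} [MeasurableSpace α] {μ : Measure α} [IsFiniteMeasure μ]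
    {g : α → ℝ} (hg : Measurable g) {C : ℝ} (hb : ∀ x, |g x| ≤ C) : Integrable g μ :=
  ⟨hg.aestronglyMeasurable, HasFiniteIntegral.of_bounded (C := C)
    (Filter.Eventually.of_forall (fun x => by simpa [Real.norm_eq_abs] using hb x))⟩

private lemma ptwise {a b c d : ℝ} (hab : a ≠ b) (hcd : c ≠ d) :
    (1 - a) * b * ((if a < b then (1:ℝ) else 0) - (if c < d then (1:ℝ) else 0))
      + (1 - b) * a * ((if b < a then (1:ℝ) else 0) - (if d < c then (1:ℝ) else 0))
    = if (a - b) * (c - d) < 0 then |a - b| else 0 := by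
  rcases hab.lt_or_gt with h | h <;> rcases hcd.lt_or_gt with h' | h' <;>
    rw [abs_sub_comm] <;>
    simp [h, h', h.not_gt, h'.not_gt, mul_pos_iff, mul_neg_iff, h.le, h'.le,
      abs_of_pos, abs_of_neg, sub_pos.2, sub_neg.2, sub_nonneg.2, not_lt.2] <;>
    ring

private lemma ite01_abs (c : Prop) [Decidable c] : |if c then (1:ℝ) else 0| ≤ 1 := by
  split_ifs <;> norm_num

private lemma pullout {Ω 𝒳 : Type*} [MeasurableSpace Ω] [MeasurableSpace 𝒳]
    (P : Measure Ω) [IsProbabilityMeasure P]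
    (X : Ω → 𝒳) (hX : Measurable X) (Y : Ω → ℝ) (hY : Measurable Y) (hYb : ∀ ω, |Y ω| ≤ 1)
    (μ0 : 𝒳 → ℝ)
    (hcond : (fun ω => μ0 (X ω)) =ᵐ[P] P[Y | MeasurableSpace.comap X inferInstance])
    (h : 𝒳 → ℝ) (hh : Measurable h) (hhb : ∀ x, |h x| ≤ 1) :
    ∫ ω, h (X ω) * Y ω ∂P = ∫ ω, h (X ω) * μ0 (X ω) ∂P := by
  have hm : MeasurableSpace.comap X inferInstance ≤ _ := hX.comap_le
  haveI : SigmaFinite (P.trim hm) := by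
    have : IsFiniteMeasure (P.trim hm) := isFiniteMeasure_trim hm
    infer_instance
  have hgm : Measurable[MeasurableSpace.comap X inferInstance] (fun ω => h (X ω)) :=
    hh.comp (Measurable.of_comap_le le_rfl)
  have hYint : Integrable Y P := integrable_bdd hY hYb
  have hgY : Integrable ((fun ω => h (X ω)) * Y) P := by
    refine integrable_bdd ((hh.comp hX).mul hY) (C := 1) (fun ω => ?_)
    have := mul_le_one₀ (hhb (X ω)) (abs_nonneg _) (hYb ω)
    simpa [abs_mul] using this
  have hpull := condExp_mul_of_stronglyMeasurable_left (μ := P)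
    hgm.stronglyMeasurable hgY hYint
  calc ∫ ω, h (X ω) * Y ω ∂P
      = ∫ ω, (P[(fun ω => h (X ω)) * Y | MeasurableSpace.comap X inferInstance]) ω ∂P :=
        (integral_condExp hm).symm
    _ = ∫ ω, ((fun ω => h (X ω)) * P[Y | MeasurableSpace.comap X inferInstance]) ω ∂P :=
        integral_congr_ae hpull
    _ = ∫ ω, h (X ω) * μ0 (X ω) ∂P := by
        refine integral_congr_ae (hcond.mono fun ω hω => ?_)
        simp only [Pi.mul_apply, ← hω]

private lemma key1 {Ω 𝒳 : Type*} [MeasurableSpace Ω] [MeasurableSpace 𝒳]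
    (P : Measure Ω) [IsProbabilityMeasure P]
    (X : Ω → 𝒳) (hX : Measurable X) (Y : Ω → ℝ) (hY : Measurable Y)
    (hY01 : ∀ ω, Y ω = 0 ∨ Y ω = 1)
    (μ0 : 𝒳 → ℝ) (hμ0 : Measurable μ0) (hμ0mem : ∀ x, μ0 x ∈ Set.Icc (0 : ℝ) 1)
    (hcond : (fun ω => μ0 (X ω)) =ᵐ[P] P[Y | MeasurableSpace.comap X inferInstance])
    (h : 𝒳 → ℝ) (hh : Measurable h) (hhb : ∀ x, |h x| ≤ 1) :
    ∫ p : 𝒳 × ℝ, h p.1 * (if p.2 = 1 then (1:ℝ) else 0) ∂(P.map (fun ω => (X ω, Y ω)))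
      = ∫ p : 𝒳 × ℝ, h p.1 * μ0 p.1 ∂(P.map (fun ω => (X ω, Y ω))) := by
  have hXY : Measurable (fun ω => (X ω, Y ω)) := hX.prodMk hY
  have hYb : ∀ ω, |Y ω| ≤ 1 := fun ω => by rcases hY01 ω with h | h <;> simp [h]
  have hmeas1 : Measurable (fun p : 𝒳 × ℝ => h p.1 * (if p.2 = 1 then (1:ℝ) else 0)) :=
    (hh.comp measurable_fst).mul
      (Measurable.ite (measurable_snd (measurableSet_singleton 1)) measurable_const
        measurable_const)
  have hmeas2 : Measurable (fun p : 𝒳 × ℝ => h p.1 * μ0 p.1) :=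
    (hh.comp measurable_fst).mul (hμ0.comp measurable_fst)
  rw [integral_map hXY.aemeasurable hmeas1.aestronglyMeasurable,
    integral_map hXY.aemeasurable hmeas2.aestronglyMeasurable]
  have : ∀ ω, h (X ω) * (if Y ω = 1 then (1:ℝ) else 0) = h (X ω) * Y ω := by
    intro ω; rcases hY01 ω with hω | hω <;> simp [hω]
  rw [integral_congr_ae (Filter.Eventually.of_forall this)]
  exact pullout P X hX Y hY hYb μ0 hcond h hh hhb

private lemma key0 {Ω 𝒳 : Type*} [MeasurableSpace Ω] [MeasurableSpace 𝒳]
    (P : Measure Ω) [IsProbabilityMeasure P]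
    (X : Ω → 𝒳) (hX : Measurable X) (Y : Ω → ℝ) (hY : Measurable Y)
    (hY01 : ∀ ω, Y ω = 0 ∨ Y ω = 1)
    (μ0 : 𝒳 → ℝ) (hμ0 : Measurable μ0) (hμ0mem : ∀ x, μ0 x ∈ Set.Icc (0 : ℝ) 1)
    (hcond : (fun ω => μ0 (X ω)) =ᵐ[P] P[Y | MeasurableSpace.comap X inferInstance])
    (h : 𝒳 → ℝ) (hh : Measurable h) (hhb : ∀ x, |h x| ≤ 1) :
    ∫ p : 𝒳 × ℝ, h p.1 * (if p.2 = 0 then (1:ℝ) else 0) ∂(P.map (fun ω => (X ω, Y ω)))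
      = ∫ p : 𝒳 × ℝ, h p.1 * (1 - μ0 p.1) ∂(P.map (fun ω => (X ω, Y ω))) := by
  have hXY : Measurable (fun ω => (X ω, Y ω)) := hX.prodMk hY
  have hYb : ∀ ω, |Y ω| ≤ 1 := fun ω => by rcases hY01 ω with h | h <;> simp [h]
  have hmeas1 : Measurable (fun p : 𝒳 × ℝ => h p.1 * (if p.2 = 0 then (1:ℝ) else 0)) :=
    (hh.comp measurable_fst).mul
      (Measurable.ite (measurable_snd (measurableSet_singleton 0)) measurable_const
        measurable_const)
  have hmeas2 : Measurable (fun p : 𝒳 × ℝ => h p.1 * (1 - μ0 p.1)) :=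
    (hh.comp measurable_fst).mul (measurable_const.sub (hμ0.comp measurable_fst))
  rw [integral_map hXY.aemeasurable hmeas1.aestronglyMeasurable,
    integral_map hXY.aemeasurable hmeas2.aestronglyMeasurable]
  have hpt : ∀ ω, h (X ω) * (if Y ω = 0 then (1:ℝ) else 0) = h (X ω) - h (X ω) * Y ω := by
    intro ω; rcases hY01 ω with hω | hω <;> simp [hω]
  rw [integral_congr_ae (Filter.Eventually.of_forall hpt)]
  have ihX : Integrable (fun ω => h (X ω)) P := integrable_bdd (hh.comp hX) (fun ω => hhb _)
  have ihXY : Integrable (fun ω => h (X ω) * Y ω) P := by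
    refine integrable_bdd ((hh.comp hX).mul hY) (C := 1) (fun ω => ?_)
    simpa [abs_mul] using mul_le_one₀ (hhb (X ω)) (abs_nonneg _) (hYb ω)
  have hμb : ∀ x, |μ0 x| ≤ 1 := fun x => abs_le.2 ⟨by linarith [(hμ0mem x).1], (hμ0mem x).2⟩
  have ihXμ : Integrable (fun ω => h (X ω) * μ0 (X ω)) P := by
    refine integrable_bdd ((hh.comp hX).mul (hμ0.comp hX)) (C := 1) (fun ω => ?_)
    simpa [abs_mul] using mul_le_one₀ (hhb (X ω)) (abs_nonneg _) (hμb (X ω))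
  rw [integral_sub ihX ihXY, pullout P X hX Y hY hYb μ0 hcond h hh hhb,
    ← integral_sub ihX ihXμ]
  exact integral_congr_ae (Filter.Eventually.of_forall (fun ω => by ring))

private lemma main_expr {Ω 𝒳 : Type*} [MeasurableSpace Ω] [MeasurableSpace 𝒳]
    (P : Measure Ω) [IsProbabilityMeasure P]
    (X X1 X2 : Ω → 𝒳) (hX : Measurable X) (hX1 : Measurable X1) (hX2 : Measurable X2)
    (Y Y1 Y2 : Ω → ℝ) (hY : Measurable Y) (hY1 : Measurable Y1) (hY2 : Measurable Y2)
    (hY01 : ∀ ω, Y ω = 0 ∨ Y ω = 1)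
    (μ0 : 𝒳 → ℝ) (hμ0 : Measurable μ0) (hμ0mem : ∀ x, μ0 x ∈ Set.Icc (0 : ℝ) 1)
    (hcond : (fun ω => μ0 (X ω)) =ᵐ[P] P[Y | MeasurableSpace.comap X inferInstance])
    (hindep : IndepFun (fun ω => (X1 ω, Y1 ω)) (fun ω => (X2 ω, Y2 ω)) P)
    (hd1 : Measure.map (fun ω => (X1 ω, Y1 ω)) P = Measure.map (fun ω => (X ω, Y ω)) P)
    (hd2 : Measure.map (fun ω => (X2 ω, Y2 ω)) P = Measure.map (fun ω => (X ω, Y ω)) P)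
    (g : 𝒳 → ℝ) (hg : Measurable g) :
    (P {ω | g (X1 ω) < g (X2 ω) ∧ Y1 ω = 0 ∧ Y2 ω = 1}).toReal
      = ∫ z : (𝒳 × ℝ) × (𝒳 × ℝ),
          (1 - μ0 z.1.1) * μ0 z.2.1 * (if g z.1.1 < g z.2.1 then (1:ℝ) else 0)
          ∂((P.map (fun ω => (X ω, Y ω))).prod (P.map (fun ω => (X ω, Y ω)))) := by
  have hXY : Measurable (fun ω => (X ω, Y ω)) := hX.prodMk hY
  set ν : Measure (𝒳 × ℝ) := P.map (fun ω => (X ω, Y ω)) with hν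
  haveI : IsProbabilityMeasure ν := Measure.isProbabilityMeasure_map hXY.aemeasurable
  have hT : Measurable (fun ω => ((X1 ω, Y1 ω), (X2 ω, Y2 ω))) :=
    (hX1.prodMk hY1).prodMk (hX2.prodMk hY2)
  have hmap : P.map (fun ω => ((X1 ω, Y1 ω), (X2 ω, Y2 ω))) = ν.prod ν := by
    rw [(indepFun_iff_map_prod_eq_prod_map_map (hX1.prodMk hY1).aemeasurable
      (hX2.prodMk hY2).aemeasurable).mp hindep, hd1, hd2]
  set S : Set ((𝒳 × ℝ) × (𝒳 × ℝ)) :=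
    {z | g z.1.1 < g z.2.1 ∧ z.1.2 = 0 ∧ z.2.2 = 1} with hSdef
  have hS : MeasurableSet S := by
    refine MeasurableSet.inter ?_ (MeasurableSet.inter ?_ ?_)
    · exact measurableSet_lt (hg.comp (measurable_fst.comp measurable_fst))
        (hg.comp (measurable_fst.comp measurable_snd))
    · exact (measurable_snd.comp measurable_fst) (measurableSet_singleton 0)
    · exact (measurable_snd.comp measurable_snd) (measurableSet_singleton 1)
  have hPep : P {ω | g (X1 ω) < g (X2 ω) ∧ Y1 ω = 0 ∧ Y2 ω = 1} = (ν.prod ν) S := by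
    rw [← hmap, Measure.map_apply hT hS]
    rfl
  -- the product-of-indicators function
  set φ : (𝒳 × ℝ) × (𝒳 × ℝ) → ℝ := fun z =>
    (if g z.1.1 < g z.2.1 then (1:ℝ) else 0) *
      ((if z.1.2 = 0 then (1:ℝ) else 0) * (if z.2.2 = 1 then (1:ℝ) else 0)) with hφdef
  have hφmeas : Measurable φ := by
    refine Measurable.mul ?_ (Measurable.mul ?_ ?_)
    · exact Measurable.ite (measurableSet_lt (hg.comp (measurable_fst.comp measurable_fst))
        (hg.comp (measurable_fst.comp measurable_snd))) measurable_const measurable_const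
    · exact Measurable.ite ((measurable_snd.comp measurable_fst) (measurableSet_singleton 0))
        measurable_const measurable_const
    · exact Measurable.ite ((measurable_snd.comp measurable_snd) (measurableSet_singleton 1))
        measurable_const measurable_const
  have hφbd : ∀ z, |φ z| ≤ 1 := by
    intro z; rw [hφdef]; simp only []
    split_ifs <;> norm_num
  have hφint : Integrable φ (ν.prod ν) := integrable_bdd hφmeas hφbd
  have hind : (P {ω | g (X1 ω) < g (X2 ω) ∧ Y1 ω = 0 ∧ Y2 ω = 1}).toReal
      = ∫ z, φ z ∂(ν.prod ν) := by
    rw [hPep, ← measureReal_def, ← integral_indicator_one hS]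
    refine integral_congr_ae (Filter.Eventually.of_forall (fun z => ?_))
    by_cases h1 : g z.1.1 < g z.2.1 <;> by_cases h2 : z.1.2 = 0 <;> by_cases h3 : z.2.2 = 1 <;>
      simp [Set.indicator_apply, hSdef, hφdef, h1, h2, h3]
  -- the inner-integral function
  set A : ℝ → ℝ := fun c => ∫ q : 𝒳 × ℝ, (if c < g q.1 then (1:ℝ) else 0) * μ0 q.1 ∂ν
    with hAdef
  have hμnn : ∀ x, 0 ≤ μ0 x := fun x => (hμ0mem x).1
  have hμle : ∀ x, μ0 x ≤ 1 := fun x => (hμ0mem x).2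
  have hintc : ∀ c : ℝ, Integrable (fun q : 𝒳 × ℝ => (if c < g q.1 then (1:ℝ) else 0) * μ0 q.1) ν := by
    intro c
    refine integrable_bdd (Measurable.mul ?_ (hμ0.comp measurable_fst)) (C := 1) (fun q => ?_)
    · exact Measurable.ite (measurableSet_lt measurable_const (hg.comp measurable_fst))
        measurable_const measurable_const
    · rw [abs_mul]
      exact mul_le_one₀ (ite01_abs _) (abs_nonneg _)
        (by rw [abs_of_nonneg (hμnn _)]; exact hμle _)
  have hAanti : Antitone A := by
    intro c c' hcc'
    refine integral_mono (hintc c') (hintc c) (fun q => ?_)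
    refine mul_le_mul_of_nonneg_right ?_ (hμnn _)
    split_ifs with h1 h2
    · exact le_refl _
    · exact absurd (lt_of_le_of_lt hcc' h1) h2
    · norm_num
    · exact le_refl _
  have hAmeas : Measurable A := hAanti.measurable
  have hAnn : ∀ c, 0 ≤ A c := by
    intro c
    refine integral_nonneg (fun q => ?_)
    exact mul_nonneg (by split_ifs <;> norm_num) (hμnn _)
  have hAle : ∀ c, A c ≤ 1 := by
    intro c
    have : A c ≤ ∫ _ : 𝒳 × ℝ, (1:ℝ) ∂ν := by
      refine integral_mono (hintc c) (integrable_const 1) (fun q => ?_)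
      exact mul_le_one₀ (by split_ifs <;> norm_num) (hμnn _) (hμle _)
    simpa using this
  have hAbd : ∀ c, |A c| ≤ 1 := fun c => abs_le.2 ⟨by linarith [hAnn c], hAle c⟩
  -- inner integral of φ
  have hinner : ∀ p : 𝒳 × ℝ, ∫ q, φ (p, q) ∂ν = (if p.2 = 0 then (1:ℝ) else 0) * A (g p.1) := by
    intro p
    have e1 : ∀ q : 𝒳 × ℝ, φ (p, q) = (if p.2 = 0 then (1:ℝ) else 0) *
        ((if g p.1 < g q.1 then (1:ℝ) else 0) * (if q.2 = 1 then (1:ℝ) else 0)) :=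
      fun q => by rw [hφdef]; ring
    rw [integral_congr_ae (Filter.Eventually.of_forall e1), integral_const_mul]
    congr 1
    exact key1 P X hX Y hY hY01 μ0 hμ0 hμ0mem hcond
      (fun x => if g p.1 < g x then (1:ℝ) else 0)
      (Measurable.ite (measurableSet_lt measurable_const hg) measurable_const measurable_const)
      (fun x => ite01_abs _)
  have lhs_eq : (P {ω | g (X1 ω) < g (X2 ω) ∧ Y1 ω = 0 ∧ Y2 ω = 1}).toReal
      = ∫ p : 𝒳 × ℝ, A (g p.1) * (1 - μ0 p.1) ∂ν := by
    rw [hind, integral_prod _ hφint]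
    rw [integral_congr_ae (Filter.Eventually.of_forall
      (fun p : 𝒳 × ℝ => hinner p))]
    rw [integral_congr_ae (Filter.Eventually.of_forall
      (fun p : 𝒳 × ℝ => mul_comm (if p.2 = 0 then (1:ℝ) else 0) (A (g p.1))))]
    exact key0 P X hX Y hY hY01 μ0 hμ0 hμ0mem hcond (fun x => A (g x))
      (hAmeas.comp hg) (fun x => hAbd _)
  -- now the right-hand side
  set ψ : (𝒳 × ℝ) × (𝒳 × ℝ) → ℝ := fun z =>
    (1 - μ0 z.1.1) * μ0 z.2.1 * (if g z.1.1 < g z.2.1 then (1:ℝ) else 0) with hψdef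
  have hψmeas : Measurable ψ := by
    refine Measurable.mul (Measurable.mul ?_ ?_) ?_
    · exact measurable_const.sub (hμ0.comp (measurable_fst.comp measurable_fst))
    · exact hμ0.comp (measurable_fst.comp measurable_snd)
    · exact Measurable.ite (measurableSet_lt (hg.comp (measurable_fst.comp measurable_fst))
        (hg.comp (measurable_fst.comp measurable_snd))) measurable_const measurable_const
  have hψbd : ∀ z, |ψ z| ≤ 1 := by
    intro z; rw [hψdef]; simp only []
    rw [abs_mul, abs_mul]
    refine mul_le_one₀ (mul_le_one₀ ?_ (abs_nonneg _) ?_) (abs_nonneg _) (ite01_abs _)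
    · rw [abs_of_nonneg (by linarith [hμle z.1.1])]; linarith [hμnn z.1.1]
    · rw [abs_of_nonneg (hμnn _)]; exact hμle _
  have hψint : Integrable ψ (ν.prod ν) := integrable_bdd hψmeas hψbd
  have rhs_eq : ∫ z, ψ z ∂(ν.prod ν) = ∫ p : 𝒳 × ℝ, A (g p.1) * (1 - μ0 p.1) ∂ν := by
    rw [integral_prod _ hψint]
    refine integral_congr_ae (Filter.Eventually.of_forall (fun p : 𝒳 × ℝ => ?_))
    show ∫ q, ψ (p, q) ∂ν = A (g p.1) * (1 - μ0 p.1)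
    have e1 : ∀ q : 𝒳 × ℝ, ψ (p, q) = (1 - μ0 p.1) *
        ((if g p.1 < g q.1 then (1:ℝ) else 0) * μ0 q.1) := fun q => by rw [hψdef]; ring
    rw [integral_congr_ae (Filter.Eventually.of_forall e1), integral_const_mul]
    exact mul_comm _ _
  rw [lhs_eq, ← rhs_eq]

/-- With `(X1, Y1)` and `(X2, Y2)` independent copies of `(X, Y)` and no ties for `μ0` or `f`,
`0 ≤ P{μ0(X1) < μ0(X2), Y1 = 0, Y2 = 1} − P{f(X1) < f(X2), Y1 = 0, Y2 = 1}
   ≤ (1/2) E[|μ0(X1) − μ0(X2)| · 1{(μ0(X1) − μ0(X2))(f(X1) − f(X2)) < 0}]`. -/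
theorem stmt13 {Ω 𝒳 : Type*} [MeasurableSpace Ω] [MeasurableSpace 𝒳]
    (P : Measure Ω) [IsProbabilityMeasure P]
    (X X1 X2 : Ω → 𝒳) (hX : Measurable X) (hX1 : Measurable X1) (hX2 : Measurable X2)
    (Y Y1 Y2 : Ω → ℝ) (hY : Measurable Y) (hY1 : Measurable Y1) (hY2 : Measurable Y2)
    (hY01 : ∀ ω, Y ω = 0 ∨ Y ω = 1)
    (μ0 : 𝒳 → ℝ) (hμ0 : Measurable μ0) (hμ0mem : ∀ x, μ0 x ∈ Set.Icc (0 : ℝ) 1)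
    (hcond : (fun ω => μ0 (X ω)) =ᵐ[P] P[Y | MeasurableSpace.comap X inferInstance])
    (hindep : IndepFun (fun ω => (X1 ω, Y1 ω)) (fun ω => (X2 ω, Y2 ω)) P)
    (hd1 : Measure.map (fun ω => (X1 ω, Y1 ω)) P = Measure.map (fun ω => (X ω, Y ω)) P)
    (hd2 : Measure.map (fun ω => (X2 ω, Y2 ω)) P = Measure.map (fun ω => (X ω, Y ω)) P)
    (f : 𝒳 → ℝ) (hf : Measurable f)
    (hties0 : P {ω | μ0 (X1 ω) = μ0 (X2 ω)} = 0)
    (htiesf : P {ω | f (X1 ω) = f (X2 ω)} = 0) :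
    0 ≤ (P {ω | μ0 (X1 ω) < μ0 (X2 ω) ∧ Y1 ω = 0 ∧ Y2 ω = 1}).toReal
        - (P {ω | f (X1 ω) < f (X2 ω) ∧ Y1 ω = 0 ∧ Y2 ω = 1}).toReal ∧
    (P {ω | μ0 (X1 ω) < μ0 (X2 ω) ∧ Y1 ω = 0 ∧ Y2 ω = 1}).toReal
        - (P {ω | f (X1 ω) < f (X2 ω) ∧ Y1 ω = 0 ∧ Y2 ω = 1}).toReal
      ≤ (1 / 2) * ∫ ω, Set.indicator
          {ω | (μ0 (X1 ω) - μ0 (X2 ω)) * (f (X1 ω) - f (X2 ω)) < 0}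
          (fun ω => |μ0 (X1 ω) - μ0 (X2 ω)|) ω ∂P := by
  have hXY : Measurable (fun ω => (X ω, Y ω)) := hX.prodMk hY
  have e1 := main_expr P X X1 X2 hX hX1 hX2 Y Y1 Y2 hY hY1 hY2 hY01 μ0 hμ0 hμ0mem hcond
    hindep hd1 hd2 μ0 hμ0
  have e2 := main_expr P X X1 X2 hX hX1 hX2 Y Y1 Y2 hY hY1 hY2 hY01 μ0 hμ0 hμ0mem hcond
    hindep hd1 hd2 f hf
  set ν : Measure (𝒳 × ℝ) := P.map (fun ω => (X ω, Y ω)) with hν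
  haveI : IsProbabilityMeasure ν := Measure.isProbabilityMeasure_map hXY.aemeasurable
  have hT : Measurable (fun ω => ((X1 ω, Y1 ω), (X2 ω, Y2 ω))) :=
    (hX1.prodMk hY1).prodMk (hX2.prodMk hY2)
  have hmap : P.map (fun ω => ((X1 ω, Y1 ω), (X2 ω, Y2 ω))) = ν.prod ν := by
    rw [(indepFun_iff_map_prod_eq_prod_map_map (hX1.prodMk hY1).aemeasurable
      (hX2.prodMk hY2).aemeasurable).mp hindep, hd1, hd2]
  have hμnn : ∀ x, 0 ≤ μ0 x := fun x => (hμ0mem x).1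
  have hμle : ∀ x, μ0 x ≤ 1 := fun x => (hμ0mem x).2
  set ψμ : (𝒳 × ℝ) × (𝒳 × ℝ) → ℝ := fun z =>
    (1 - μ0 z.1.1) * μ0 z.2.1 * (if μ0 z.1.1 < μ0 z.2.1 then (1:ℝ) else 0) with hψμdef
  set ψf : (𝒳 × ℝ) × (𝒳 × ℝ) → ℝ := fun z =>
    (1 - μ0 z.1.1) * μ0 z.2.1 * (if f z.1.1 < f z.2.1 then (1:ℝ) else 0) with hψfdef
  have hψmeas : ∀ (g : 𝒳 → ℝ), Measurable g → Measurable (fun z : (𝒳 × ℝ) × (𝒳 × ℝ) =>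
      (1 - μ0 z.1.1) * μ0 z.2.1 * (if g z.1.1 < g z.2.1 then (1:ℝ) else 0)) := by
    intro g hg
    refine Measurable.mul (Measurable.mul ?_ ?_) ?_
    · exact measurable_const.sub (hμ0.comp (measurable_fst.comp measurable_fst))
    · exact hμ0.comp (measurable_fst.comp measurable_snd)
    · exact Measurable.ite (measurableSet_lt (hg.comp (measurable_fst.comp measurable_fst))
        (hg.comp (measurable_fst.comp measurable_snd))) measurable_const measurable_const
  have hψbd : ∀ (g : 𝒳 → ℝ) (z : (𝒳 × ℝ) × (𝒳 × ℝ)),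
      |(1 - μ0 z.1.1) * μ0 z.2.1 * (if g z.1.1 < g z.2.1 then (1:ℝ) else 0)| ≤ 1 := by
    intro g z
    rw [abs_mul, abs_mul]
    refine mul_le_one₀ (mul_le_one₀ ?_ (abs_nonneg _) ?_) (abs_nonneg _)
      (by split_ifs <;> norm_num)
    · rw [abs_of_nonneg (by linarith [hμle z.1.1])]; linarith [hμnn z.1.1]
    · rw [abs_of_nonneg (hμnn _)]; exact hμle _
  have hψμint : Integrable ψμ (ν.prod ν) := integrable_bdd (hψmeas μ0 hμ0) (hψbd μ0)
  have hψfint : Integrable ψf (ν.prod ν) := integrable_bdd (hψmeas f hf) (hψbd f)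
  have hsubint : Integrable (fun z => ψμ z - ψf z) (ν.prod ν) := hψμint.sub hψfint
  have hswapint : Integrable (fun z : (𝒳 × ℝ) × (𝒳 × ℝ) => ψμ z.swap - ψf z.swap) (ν.prod ν) := by
    refine integrable_bdd (((hψmeas μ0 hμ0).comp measurable_swap).sub
      ((hψmeas f hf).comp measurable_swap)) (C := 2) (fun z => ?_)
    calc |ψμ z.swap - ψf z.swap| ≤ |ψμ z.swap| + |ψf z.swap| := abs_sub _ _
      _ ≤ 1 + 1 := add_le_add (hψbd μ0 _) (hψbd f _)
      _ = 2 := by norm_num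
  -- the bound function G
  set G : (𝒳 × ℝ) × (𝒳 × ℝ) → ℝ := fun z =>
    if (μ0 z.1.1 - μ0 z.2.1) * (f z.1.1 - f z.2.1) < 0 then |μ0 z.1.1 - μ0 z.2.1| else 0
    with hGdef
  have hGmeas : Measurable G := by
    refine Measurable.ite ?_ ?_ measurable_const
    · exact measurableSet_lt (Measurable.mul
        ((hμ0.comp (measurable_fst.comp measurable_fst)).sub
          (hμ0.comp (measurable_fst.comp measurable_snd)))
        ((hf.comp (measurable_fst.comp measurable_fst)).sub
          (hf.comp (measurable_fst.comp measurable_snd)))) measurable_const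
    · exact ((hμ0.comp (measurable_fst.comp measurable_fst)).sub
        (hμ0.comp (measurable_fst.comp measurable_snd))).abs
  -- no ties a.e.
  have haegen : ∀ (g : 𝒳 → ℝ), Measurable g → P {ω | g (X1 ω) = g (X2 ω)} = 0 →
      ∀ᵐ z ∂(ν.prod ν), g z.1.1 ≠ g z.2.1 := by
    intro g hg hzero
    have hSet : MeasurableSet {z : (𝒳 × ℝ) × (𝒳 × ℝ) | g z.1.1 = g z.2.1} :=
      measurableSet_eq_fun (hg.comp (measurable_fst.comp measurable_fst))
        (hg.comp (measurable_fst.comp measurable_snd))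
    have hz : (ν.prod ν) {z : (𝒳 × ℝ) × (𝒳 × ℝ) | g z.1.1 = g z.2.1} = 0 := by
      rw [← hmap, Measure.map_apply hT hSet]
      exact hzero
    rw [ae_iff]
    simpa [not_not] using hz
  have hae0 := haegen μ0 hμ0 hties0
  have haef := haegen f hf htiesf
  -- a.e. identity
  have hae_eq : (fun z => (ψμ z - ψf z) + (ψμ z.swap - ψf z.swap)) =ᵐ[ν.prod ν] G := by
    filter_upwards [hae0, haef] with z h0 hff
    have key := ptwise h0 hff
    show (ψμ z - ψf z) + (ψμ z.swap - ψf z.swap) = G z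
    rw [hψμdef, hψfdef, hGdef]
    simp only [Prod.fst_swap, Prod.snd_swap]
    rw [← key]
    ring
  -- symmetrization
  have hswap : ∫ z, (ψμ z.swap - ψf z.swap) ∂(ν.prod ν) = ∫ z, (ψμ z - ψf z) ∂(ν.prod ν) :=
    integral_prod_swap (fun z => ψμ z - ψf z)
  have hD : (P {ω | μ0 (X1 ω) < μ0 (X2 ω) ∧ Y1 ω = 0 ∧ Y2 ω = 1}).toReal
      - (P {ω | f (X1 ω) < f (X2 ω) ∧ Y1 ω = 0 ∧ Y2 ω = 1}).toReal
      = (1/2) * ∫ z, G z ∂(ν.prod ν) := by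
    rw [e1, e2, ← integral_sub hψμint hψfint, ← integral_congr_ae hae_eq,
      integral_add hsubint hswapint, hswap]
    ring
  -- identify the RHS integral
  have hRHS : ∫ z, G z ∂(ν.prod ν) = ∫ ω, Set.indicator
      {ω | (μ0 (X1 ω) - μ0 (X2 ω)) * (f (X1 ω) - f (X2 ω)) < 0}
      (fun ω => |μ0 (X1 ω) - μ0 (X2 ω)|) ω ∂P := by
    rw [← hmap, integral_map hT.aemeasurable hGmeas.aestronglyMeasurable]
    refine integral_congr_ae (Filter.Eventually.of_forall (fun ω => ?_))
    rw [hGdef]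
    simp only [Set.indicator_apply, Set.mem_setOf_eq]
  have hGnn : 0 ≤ ∫ z, G z ∂(ν.prod ν) := by
    refine integral_nonneg (fun z => ?_)
    rw [hGdef]
    simp only []
    split_ifs
    · exact abs_nonneg _
    · exact le_refl 0
  constructor
  · rw [hD]
    exact mul_nonneg (by norm_num) hGnn
  · rw [hD, ← hRHS]
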